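/- arXiv:1506.06484 — 4 statements merged into one kernel-verified Lean document; each statement's English description precedes it below -/
import Mathlib

section
/- Let g(ψ) = c·(C - ψ·c_S)·e^{-(C - ψ·c_S)/(π₀·ψ·c_TX)} for constants c > 0, C > 0, c_S > 0, c_TX > 0, π₀ ∈ (0,1]. Then g is increasing on (0, ψ*) and decreasing on (ψ*, C/c_S), where ψ* = (2C/c_S)/(1 + √(1 + 4π₀·c_TX/c_S)); consequently the unconstrained maximizer of g over (0, C/c_S) is ψ*. -/
open Real Set

lemma gderiv_aux (c C cS cTX π₀ : ℝ) (hπ0 : 0 < π₀) (hcTX : 0 < cTX) {ψ : ℝ} (hψ : 0 < ψ) :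
    HasDerivAt (fun x => c * (C - x * cS) * Real.exp (-(C - x * cS) / (π₀ * x * cTX)))
      (c * Real.exp (-(C - ψ * cS) / (π₀ * ψ * cTX)) *
        ((C ^ 2 - C * cS * ψ - cS * π₀ * cTX * ψ ^ 2) / (π₀ * cTX * ψ ^ 2))) ψ := by
  have hden : π₀ * ψ * cTX ≠ 0 := by positivity
  have hπ : π₀ ≠ 0 := ne_of_gt hπ0
  have hT : cTX ≠ 0 := ne_of_gt hcTX
  have hψ' : ψ ≠ 0 := ne_of_gt hψ
  have h1 : HasDerivAt (fun x : ℝ => C - x * cS) (-cS) ψ := by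
    simpa using ((hasDerivAt_id ψ).mul_const cS).const_sub C
  have hnum : HasDerivAt (fun x : ℝ => -(C - x * cS)) cS ψ := by have := h1.neg; simp only [neg_neg] at this; exact this
  have hd : HasDerivAt (fun x : ℝ => π₀ * x * cTX) (π₀ * cTX) ψ := by
    simpa using ((hasDerivAt_id ψ).const_mul π₀).mul_const cTX
  have hf2 : HasDerivAt (fun x : ℝ => -(C - x * cS) / (π₀ * x * cTX))
      ((cS * (π₀ * ψ * cTX) - -(C - ψ * cS) * (π₀ * cTX)) / (π₀ * ψ * cTX) ^ 2) ψ :=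
    hnum.div hd hden
  have hexp := hf2.exp
  have hmul := (h1.const_mul c).mul hexp
  refine hmul.congr_deriv ?_
  field_simp
  ring

/-- Let `g(ψ) = c (C - ψ c_S) e^{-(C - ψ c_S)/(π₀ ψ c_TX)}` for constants `c > 0`, `C > 0`,
`c_S > 0`, `c_TX > 0`, `π₀ ∈ (0,1]`.  Then `g` is increasing on `(0, ψ*)` and decreasing on
`(ψ*, C/c_S)`, where `ψ* = (2C/c_S)/(1 + √(1 + 4π₀ c_TX/c_S))`; consequently the
unconstrained maximizer of `g` over `(0, C/c_S)` is `ψ*`. -/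
theorem sensing_traffic_optimum (c C cS cTX π₀ : ℝ)
    (hc : 0 < c) (hC : 0 < C) (hcS : 0 < cS) (hcTX : 0 < cTX)
    (hπ0 : 0 < π₀) (hπ1 : π₀ ≤ 1) :
    let g : ℝ → ℝ := fun ψ => c * (C - ψ * cS) * Real.exp (-(C - ψ * cS) / (π₀ * ψ * cTX))
    let ψs : ℝ := (2 * C / cS) / (1 + Real.sqrt (1 + 4 * π₀ * cTX / cS))
    StrictMonoOn g (Set.Ioc 0 ψs) ∧ StrictAntiOn g (Set.Ico ψs (C / cS)) ∧
      ∀ ψ ∈ Set.Ioo (0 : ℝ) (C / cS), g ψ ≤ g ψs := by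
  intro g ψs
  have hgfun : g = fun ψ => c * (C - ψ * cS) * Real.exp (-(C - ψ * cS) / (π₀ * ψ * cTX)) := rfl
  set s := Real.sqrt (1 + 4 * π₀ * cTX / cS) with hs_def
  have hψs_def : ψs = (2 * C / cS) / (1 + s) := rfl
  have hs1 : 1 < s := by
    rw [hs_def]
    apply (Real.lt_sqrt (by positivity)).mpr
    have : 0 < 4 * π₀ * cTX / cS := by positivity
    nlinarith
  have hs2 : s ^ 2 = 1 + 4 * π₀ * cTX / cS := Real.sq_sqrt (by positivity)
  have hs2' : cS * s ^ 2 = cS + 4 * π₀ * cTX := by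
    rw [hs2]; field_simp
  have hψs_pos : 0 < ψs := by
    rw [hψs_def]; exact div_pos (by positivity) (by linarith)
  have hψs_lt : ψs < C / cS := by
    have h2 : (2:ℝ) < 1 + s := by linarith
    have := div_lt_div_of_pos_left (show (0:ℝ) < 2 * C / cS by positivity) (by norm_num) h2
    rw [hψs_def]
    calc (2 * C / cS) / (1 + s) < (2 * C / cS) / 2 := this
      _ = C / cS := by field_simp
  have h1' : cS * ψs * (1 + s) = 2 * C := by
    rw [hψs_def]
    field_simp
  have hquad : C ^ 2 - C * cS * ψs - cS * π₀ * cTX * ψs ^ 2 = 0 := by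
    linear_combination (-(C/2 + cS*ψs*(s-1)/4)) * h1' + (cS*ψs^2/4) * hs2'
  -- sign of the quadratic
  have hsign_pos : ∀ ψ : ℝ, 0 < ψ → ψ < ψs →
      0 < C ^ 2 - C * cS * ψ - cS * π₀ * cTX * ψ ^ 2 := by
    intro ψ hψ hlt
    nlinarith [mul_pos (sub_pos.mpr hlt)
      (show 0 < C * cS + cS * π₀ * cTX * (ψ + ψs) by positivity)]
  have hsign_neg : ∀ ψ : ℝ, ψs < ψ →
      C ^ 2 - C * cS * ψ - cS * π₀ * cTX * ψ ^ 2 < 0 := by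
    intro ψ hlt
    have hψ0 : 0 < ψ := lt_trans hψs_pos hlt
    nlinarith [mul_pos (sub_pos.mpr hlt)
      (show 0 < C * cS + cS * π₀ * cTX * (ψ + ψs) by
        nlinarith [mul_pos (mul_pos hcS (mul_pos hπ0 hcTX))
          (show 0 < ψ + ψs by linarith), mul_pos hC hcS])]
  have hderiv : ∀ ψ : ℝ, 0 < ψ → HasDerivAt g
      (c * Real.exp (-(C - ψ * cS) / (π₀ * ψ * cTX)) *
        ((C ^ 2 - C * cS * ψ - cS * π₀ * cTX * ψ ^ 2) / (π₀ * cTX * ψ ^ 2))) ψ := by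
    intro ψ hψ
    rw [hgfun]
    exact gderiv_aux c C cS cTX π₀ hπ0 hcTX hψ
  have hderiv_eq : ∀ ψ : ℝ, 0 < ψ → deriv g ψ =
      c * Real.exp (-(C - ψ * cS) / (π₀ * ψ * cTX)) *
        ((C ^ 2 - C * cS * ψ - cS * π₀ * cTX * ψ ^ 2) / (π₀ * cTX * ψ ^ 2)) :=
    fun ψ hψ => (hderiv ψ hψ).deriv
  have hcont : ∀ S : Set ℝ, S ⊆ Ioi 0 → ContinuousOn g S := by
    intro S hS x hx
    exact ((hderiv x (hS hx)).continuousAt).continuousWithinAt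
  have hmono : StrictMonoOn g (Set.Ioc 0 ψs) := by
    apply strictMonoOn_of_deriv_pos (convex_Ioc 0 ψs)
      (hcont _ (fun x hx => hx.1))
    intro x hx
    rw [interior_Ioc] at hx
    rw [hderiv_eq x hx.1]
    have h1 : 0 < Real.exp (-(C - x * cS) / (π₀ * x * cTX)) := Real.exp_pos _
    have h2 := hsign_pos x hx.1 hx.2
    have h3 : 0 < π₀ * cTX * x ^ 2 := mul_pos (mul_pos hπ0 hcTX) (pow_pos hx.1 2)
    exact mul_pos (by positivity) (div_pos h2 h3)
  have hanti : StrictAntiOn g (Set.Ico ψs (C / cS)) := by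
    apply strictAntiOn_of_deriv_neg (convex_Ico ψs (C / cS))
      (hcont _ (fun x hx => lt_of_lt_of_le hψs_pos hx.1))
    intro x hx
    rw [interior_Ico] at hx
    have hx0 : 0 < x := lt_trans hψs_pos hx.1
    rw [hderiv_eq x hx0]
    have h1 : 0 < Real.exp (-(C - x * cS) / (π₀ * x * cTX)) := Real.exp_pos _
    have h2 := hsign_neg x hx.1
    have h3 : 0 < π₀ * cTX * x ^ 2 := mul_pos (mul_pos hπ0 hcTX) (pow_pos hx0 2)
    have h4 : (C ^ 2 - C * cS * x - cS * π₀ * cTX * x ^ 2) / (π₀ * cTX * x ^ 2) < 0 :=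
      div_neg_of_neg_of_pos h2 h3
    exact mul_neg_of_pos_of_neg (by positivity) h4
  refine ⟨hmono, hanti, ?_⟩
  intro ψ hψ
  rcases le_or_gt ψ ψs with h | h
  · exact hmono.monotoneOn ⟨hψ.1, h⟩ ⟨hψs_pos, le_refl _⟩ h
  · exact hanti.antitoneOn ⟨le_refl _, hψs_lt⟩ ⟨le_of_lt h, hψ.2⟩ (le_of_lt h)
end

section
/- In the belief Markov chain with states (b,τ), b ∈ {0,1}, τ ≥ 1, where from state (b,τ) with probability p_S(b) a measurement resets the belief (transitioning to the state detected after a τ-step channel evolution with delay reset to 1), and with probability 1-p_S(b) the state moves to (b,τ+1): the stationary distribution satisfies π(b,τ) = (f(b)/(f(0)/p_S(0) + f(1)/p_S(1))) · (1-p_S(b))^{τ-1}, where f(b) = Σ_{τ=1}^∞ (1-p_S(1-b))^{τ-1} p_S(1-b) P^{(τ)}(b|1-b) and P^{(τ)} denotes the τ-step channel transition probability. -/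
open Real

lemma aux_summable (p : ℝ) (hp : p ∈ Set.Ioo (0:ℝ) 1) (q : ℕ → ℝ)
    (hq0 : ∀ t, 0 ≤ q t) (hq1 : ∀ t, q t ≤ 1) :
    Summable (fun t : ℕ => (1 - p) ^ t * p * q t) := by
  obtain ⟨hp0, hp1⟩ := hp
  have h1p : (0:ℝ) ≤ 1 - p := by linarith
  have hg : Summable (fun t : ℕ => (1 - p) ^ t) :=
    summable_geometric_of_lt_one h1p (by linarith)
  refine Summable.of_nonneg_of_le
    (fun t => by apply mul_nonneg (mul_nonneg (pow_nonneg h1p t) hp0.le) (hq0 t))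
    (fun t => ?_) hg
  calc (1 - p) ^ t * p * q t ≤ (1 - p)^t * 1 * 1 := by
        apply mul_le_mul _ (hq1 t) (hq0 t) (mul_nonneg (pow_nonneg h1p t) zero_le_one)
        exact mul_le_mul_of_nonneg_left hp1.le (pow_nonneg h1p t)
    _ = (1 - p)^t := by ring

lemma aux_geom (p : ℝ) (hp : p ∈ Set.Ioo (0:ℝ) 1) :
    ∑' t : ℕ, (1 - p) ^ t * p = 1 := by
  obtain ⟨hp0, hp1⟩ := hp
  rw [tsum_mul_right, tsum_geometric_of_lt_one (by linarith) (by linarith)]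
  field_simp
  rw [sub_sub_cancel, div_self hp0.ne']

/-- Stationary distribution of the belief Markov chain with states `(b,τ)`, `b ∈ {0,1}`,
`τ ≥ 1` (here `τ` is encoded as `t+1` for `t : ℕ`).  From `(b,τ)`, with probability
`p_S(b)` a measurement resets the belief (transitioning to the state detected after a
`τ`-step channel evolution, with delay reset to `1`), and with probability `1 - p_S(b)`
the state moves to `(b,τ+1)`.  The stationary distribution is
`pist(b,τ) = (f(b)/(f(0)/p_S(0) + f(1)/p_S(1))) (1-p_S(b))^{τ-1}`, where
`f(b) = Σ_{τ≥1} (1-p_S(1-b))^{τ-1} p_S(1-b) P^{(τ)}(b|1-b)`. -/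
theorem belief_chain_stationary (pS : Bool → ℝ) (P : ℕ → Bool → Bool → ℝ)
    (hpS : ∀ b, pS b ∈ Set.Ioo (0 : ℝ) 1)
    (hP0 : ∀ τ b b', 0 ≤ P τ b b') (hP1 : ∀ τ b, P τ b false + P τ b true = 1) :
    let f : Bool → ℝ := fun b => ∑' t : ℕ, (1 - pS (Bool.not b)) ^ t * pS (Bool.not b) * P (t + 1) (Bool.not b) b
    let Z : ℝ := f false / pS false + f true / pS true
    let pist : Bool → ℕ → ℝ := fun b t => (f b / Z) * (1 - pS b) ^ t
    -- pist(b, τ+1) = pist(b, τ)(1 - p_S(b))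
    (∀ b t, pist b (t + 1) = pist b t * (1 - pS b)) ∧
    -- pist(b, 1) = Σ_{b'} Σ_{τ≥1} pist(b', τ) p_S(b') P^{(τ)}(b|b')
    (∀ b, pist b 0 =
      ∑' t : ℕ, (pist false t * pS false * P (t + 1) false b +
                 pist true t * pS true * P (t + 1) true b)) := by
  intro f Z pist
  have hPle1 : ∀ τ b' c, P τ b' c ≤ 1 := by
    intro τ b' c
    have h1 := hP1 τ b'
    have h2 := hP0 τ b' false
    have h3 := hP0 τ b' true
    cases c <;> linarith
  -- summability
  have hS : ∀ b' c, Summable (fun t : ℕ => (1 - pS b') ^ t * pS b' * P (t + 1) b' c) :=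
    fun b' c => aux_summable _ (hpS b') _ (fun t => hP0 _ _ _) (fun t => hPle1 _ _ _)
  set S : Bool → Bool → ℝ :=
    fun b' c => ∑' t : ℕ, (1 - pS b') ^ t * pS b' * P (t + 1) b' c with hSdef
  have hSsum : ∀ b', S b' false + S b' true = 1 := by
    intro b'
    rw [hSdef]
    rw [← Summable.tsum_add (hS b' false) (hS b' true)]
    calc ∑' t : ℕ, ((1 - pS b') ^ t * pS b' * P (t + 1) b' false +
            (1 - pS b') ^ t * pS b' * P (t + 1) b' true)
        = ∑' t : ℕ, (1 - pS b') ^ t * pS b' :=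
          tsum_congr fun t => by linear_combination ((1 - pS b') ^ t * pS b') * hP1 (t + 1) b'
      _ = 1 := aux_geom (pS b') (hpS b')
  have hf : ∀ b : Bool, f b = S (!b) b := fun b => rfl
  refine ⟨fun b t => by simp only [pist, pow_succ]; ring, fun b => ?_⟩
  have hRHS : (∑' t : ℕ, (pist false t * pS false * P (t + 1) false b +
                 pist true t * pS true * P (t + 1) true b))
      = (f false / Z) * S false b + (f true / Z) * S true b := by
    have e1 : ∀ t : ℕ, pist false t * pS false * P (t + 1) false b +
        pist true t * pS true * P (t + 1) true b
        = (f false / Z) * ((1 - pS false) ^ t * pS false * P (t + 1) false b) +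
          (f true / Z) * ((1 - pS true) ^ t * pS true * P (t + 1) true b) := by
      intro t; simp only [pist]; ring
    rw [tsum_congr e1,
      Summable.tsum_add ((hS false b).mul_left _) ((hS true b).mul_left _),
      tsum_mul_left, tsum_mul_left]
  rw [hRHS]
  simp only [pist, pow_zero, mul_one]
  cases b
  · rw [hf false, hf true]
    simp only [Bool.not_false, Bool.not_true]
    linear_combination (-(S true false / Z)) * hSsum false
  · rw [hf false, hf true]
    simp only [Bool.not_false, Bool.not_true]
    linear_combination (-(S false true / Z)) * hSsum true
end

section
/- For each i with β_i < ξ(1-ρ_S)/((1-ξ)(1-ρ_P)+ξ(1-ρ_S)), the function r_i ↦ [(1-β_i)r_i + c·β_i]e^{-r_i} with c = ((1-ξ)(1-ρ_P))/(ξ(1-ρ_S)) is strictly concave on [0, r_max,i], where r_max,i = 1 - (β_i/(1-β_i))·c; in particular its second derivative g(r_i) = [(1-β_i)(r_i - 2) + c·β_i]e^{-r_i} satisfies g(r_i) ≤ -(1-β_i)e^{-r_max,i} < 0 for all r_i ∈ [0, r_max,i]. -/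
open Real Set

private lemma aux_hasDerivAt (a b r : ℝ) :
    HasDerivAt (fun r : ℝ => (a * r + b) * Real.exp (-r))
      ((a - (a * r + b)) * Real.exp (-r)) r := by
  have h1 : HasDerivAt (fun r : ℝ => a * r + b) a r := by
    simpa using ((hasDerivAt_id r).const_mul a).add_const b
  have h2 : HasDerivAt (fun r : ℝ => Real.exp (-r)) (-Real.exp (-r)) r := by
    convert (hasDerivAt_neg r).exp using 1
    ring
  exact (h1.fun_mul h2).congr_deriv (by ring)

private lemma aux_deriv (a b : ℝ) :
    deriv (fun r : ℝ => (a * r + b) * Real.exp (-r))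
      = fun r : ℝ => ((-a) * r + (a - b)) * Real.exp (-r) := by
  funext r
  rw [(aux_hasDerivAt a b r).deriv]
  ring

/-- For a band with `β_i` below the threshold, the per-band objective
`r ↦ [(1-β_i) r + c β_i] e^{-r}` with `c = ((1-ξ)(1-ρ_P))/(ξ(1-ρ_S))` is strictly concave
on `[0, r_max,i]`, where `r_max,i = 1 - (β_i/(1-β_i)) c`; its second derivative
`g(r) = [(1-β_i)(r-2) + c β_i] e^{-r}` satisfies
`g(r) ≤ -(1-β_i) e^{-r_max,i} < 0` on `[0, r_max,i]`. -/
theorem per_band_objective_strictly_concave (βi ξ ρS ρP : ℝ)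
    (hβ : βi ∈ Set.Ico (0 : ℝ) 1) (hξ : ξ ∈ Set.Ioo (0 : ℝ) 1)
    (hρS : ρS ∈ Set.Ico (0 : ℝ) 1) (hρP : ρP ∈ Set.Ico (0 : ℝ) 1)
    (hthr : βi < ξ * (1 - ρS) / ((1 - ξ) * (1 - ρP) + ξ * (1 - ρS))) :
    let c : ℝ := ((1 - ξ) * (1 - ρP)) / (ξ * (1 - ρS))
    let rmax : ℝ := 1 - (βi / (1 - βi)) * c
    let f : ℝ → ℝ := fun r => ((1 - βi) * r + c * βi) * Real.exp (-r)
    let g : ℝ → ℝ := fun r => ((1 - βi) * (r - 2) + c * βi) * Real.exp (-r)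
    (∀ r : ℝ, deriv (deriv f) r = g r) ∧
    StrictConcaveOn ℝ (Set.Icc 0 rmax) f ∧
    (∀ r ∈ Set.Icc (0 : ℝ) rmax,
      g r ≤ -(1 - βi) * Real.exp (-rmax) ∧ g r < 0) := by
  intro c rmax f g
  obtain ⟨hβ0, hβ1⟩ := hβ
  obtain ⟨hξ0, hξ1⟩ := hξ
  have hρS1 : (0:ℝ) < 1 - ρS := by linarith [hρS.2]
  have hρP1 : (0:ℝ) < 1 - ρP := by linarith [hρP.2]
  have hxi : (0:ℝ) < ξ * (1 - ρS) := by positivity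
  have hD : (0:ℝ) < (1 - ξ) * (1 - ρP) + ξ * (1 - ρS) := by nlinarith
  have hc : 0 < c := by
    have : (0:ℝ) < (1 - ξ) * (1 - ρP) := by nlinarith
    exact div_pos this hxi
  have h1β : (0:ℝ) < 1 - βi := by linarith
  -- key: βi * (c + 1) < 1
  have hkey : βi * (c + 1) < 1 := by
    have h1 : βi * ((1 - ξ) * (1 - ρP) + ξ * (1 - ρS)) < ξ * (1 - ρS) := by
      have := (lt_div_iff₀ hD).mp hthr
      linarith
    have hc1 : c + 1 = ((1 - ξ) * (1 - ρP) + ξ * (1 - ρS)) / (ξ * (1 - ρS)) := by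
      simp only [c]
      field_simp
    rw [hc1, ← mul_div_assoc, div_lt_one hxi]
    linarith
  have hrmax : 0 < rmax := by
    have : (βi / (1 - βi)) * c < 1 := by
      rw [div_mul_eq_mul_div, div_lt_one h1β]
      nlinarith
    simp only [rmax]; linarith
  -- second derivative
  have hd2 : ∀ r : ℝ, deriv (deriv f) r = g r := by
    intro r
    have hf : f = fun r : ℝ => ((1 - βi) * r + c * βi) * Real.exp (-r) := rfl
    rw [hf, aux_deriv (1 - βi) (c * βi),
      (aux_hasDerivAt (-(1 - βi)) ((1 - βi) - c * βi) r).congr_deriv rfl |>.deriv]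
    · simp only [g]; ring
  -- g identity: g r = (1-βi) * (r - 1 - rmax) * exp (-r)
  have hgid : ∀ r : ℝ, g r = (1 - βi) * (r - 1 - rmax) * Real.exp (-r) := by
    intro r
    have : (1 - βi) * (1 - rmax) = c * βi := by
      simp only [rmax]
      field_simp
      ring
    simp only [g]
    nlinarith [Real.exp_pos (-r), this]
  have hbound : ∀ r ∈ Set.Icc (0 : ℝ) rmax,
      g r ≤ -(1 - βi) * Real.exp (-rmax) ∧ g r < 0 := by
    intro r hr
    obtain ⟨hr0, hr1⟩ := hr
    have he : Real.exp (-rmax) ≤ Real.exp (-r) := Real.exp_le_exp.mpr (by linarith)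
    have hep : 0 < Real.exp (-r) := Real.exp_pos _
    have hepm : 0 < Real.exp (-rmax) := Real.exp_pos _
    have h1 : g r ≤ -(1 - βi) * Real.exp (-rmax) := by
      rw [hgid r]
      have s1 : (1 - βi) * (r - 1 - rmax) * Real.exp (-r) ≤ -(1 - βi) * Real.exp (-r) := by
        nlinarith [mul_nonneg (mul_nonneg h1β.le hep.le) (sub_nonneg.mpr hr1)]
      have s2 : -(1 - βi) * Real.exp (-r) ≤ -(1 - βi) * Real.exp (-rmax) := by
        nlinarith [mul_le_mul_of_nonneg_left he h1β.le]
      linarith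
    exact ⟨h1, by nlinarith⟩
  refine ⟨hd2, ?_, hbound⟩
  apply strictConcaveOn_of_deriv2_neg (convex_Icc 0 rmax)
  · exact Continuous.continuousOn (by fun_prop)
  · intro x hx
    rw [interior_Icc] at hx
    have : deriv^[2] f x = deriv (deriv f) x := by
      simp [Function.iterate_succ, Function.comp]
    rw [this, hd2 x]
    exact (hbound x ⟨le_of_lt hx.1, le_of_lt hx.2⟩).2
end

section
/- Consider maximizing F(r) = Σ_{i=1}^F [(1-β_i)r_i + c·β_i]e^{-r_i} over {r : 0 ≤ r_i ≤ r_max,i, Σ_i r_i = Λ}, with c > 0, β_i ∈ [0,1), Λ ∈ [0, Σ_i r_max,i]. If β_i > β_j for some i ≠ j, then any maximizer r* satisfies r*_i ≤ r*_j. -/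
open Real Finset

lemma key_mono (c : ℝ) (hc : 0 < c) :
    StrictMonoOn (fun x => (x - c) * Real.exp (-x)) (Set.Icc (0:ℝ) (1 + c)) := by
  apply strictMonoOn_of_deriv_pos (convex_Icc _ _)
  · fun_prop
  · intro x hx
    rw [interior_Icc] at hx
    have h : HasDerivAt (fun x => (x - c) * Real.exp (-x))
        (1 * Real.exp (-x) + (x - c) * (Real.exp (-x) * (-1))) x := by
      exact ((hasDerivAt_id x).sub_const c).mul ((Real.hasDerivAt_exp (-x)).comp x
        ((hasDerivAt_id x).neg))
    rw [h.deriv]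
    have hex : 0 < Real.exp (-x) := Real.exp_pos _
    nlinarith [hx.2, hex]

/-- Part 4 of Theorem 2: maximizing `F(r) = Σ_i [(1-β_i) r_i + c β_i] e^{-r_i}` over
`{r : 0 ≤ r_i ≤ r_max,i, Σ_i r_i = Λ}`, with `c > 0`, `β_i ∈ [0,1)` and
`r_max,i = max{0, 1 - c β_i/(1-β_i)}`: if `β_i > β_j` then any maximizer `rstar` satisfies
`rstar_i ≤ rstar_j`. -/
theorem myopic_allocation_monotone (F : ℕ) (β : Fin F → ℝ) (c Λ : ℝ)
    (hc : 0 < c) (hβ : ∀ i, β i ∈ Set.Ico (0 : ℝ) 1)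
    (rmax : Fin F → ℝ) (hrmax : ∀ i, rmax i = max 0 (1 - c * β i / (1 - β i)))
    (hΛ0 : 0 ≤ Λ) (hΛ : Λ ≤ ∑ i, rmax i)
    (obj : (Fin F → ℝ) → ℝ)
    (hobj : ∀ r, obj r = ∑ i, ((1 - β i) * r i + c * β i) * Real.exp (-(r i)))
    (rstar : Fin F → ℝ)
    (hfeas : (∀ i, 0 ≤ rstar i ∧ rstar i ≤ rmax i) ∧ ∑ i, rstar i = Λ)
    (hopt : ∀ r : Fin F → ℝ,
      ((∀ i, 0 ≤ r i ∧ r i ≤ rmax i) ∧ ∑ i, r i = Λ) → obj r ≤ obj rstar)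
    (i j : Fin F) (hij : i ≠ j) (hβij : β i > β j) :
    rstar i ≤ rstar j := by
  by_contra hcon
  push_neg at hcon
  set a := rstar i with ha
  set b := rstar j with hb
  obtain ⟨hfeas1, hfeas2⟩ := hfeas
  have hβi := hβ i
  have hβj := hβ j
  obtain ⟨hβi0, hβi1⟩ := hβi
  obtain ⟨hβj0, hβj1⟩ := hβj
  -- rmax i ≤ rmax j
  have hfrac : c * β j / (1 - β j) ≤ c * β i / (1 - β i) := by
    rw [div_le_div_iff₀ (by linarith) (by linarith)]
    nlinarith
  have hrm : rmax i ≤ rmax j := by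
    rw [hrmax i, hrmax j]
    exact max_le_max le_rfl (by linarith)
  have hrmi1 : rmax i ≤ 1 := by
    rw [hrmax i]
    have : 0 ≤ c * β i / (1 - β i) := div_nonneg (by nlinarith) (by linarith)
    have h1 : 1 - c * β i / (1 - β i) ≤ 1 := by linarith
    exact max_le (by norm_num) h1
  have hb0 : 0 ≤ b := (hfeas1 j).1
  have hai : a ≤ rmax i := (hfeas1 i).2
  have ha1 : a ≤ 1 + c := by linarith
  -- the swapped point
  set r' : Fin F → ℝ := rstar ∘ Equiv.swap i j with hr'
  have hr'i : r' i = b := by simp [hr', Equiv.swap_apply_left, hb]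
  have hr'j : r' j = a := by simp [hr', Equiv.swap_apply_right, ha]
  have hr'k : ∀ k, k ≠ i → k ≠ j → r' k = rstar k := by
    intro k hki hkj
    simp [hr', Equiv.swap_apply_of_ne_of_ne hki hkj]
  have hfeas' : (∀ k, 0 ≤ r' k ∧ r' k ≤ rmax k) ∧ ∑ k, r' k = Λ := by
    constructor
    · intro k
      by_cases hki : k = i
      · subst hki; rw [hr'i]; exact ⟨hb0, by linarith⟩
      · by_cases hkj : k = j
        · subst hkj; rw [hr'j]
          exact ⟨le_trans (hfeas1 i).1 le_rfl, le_trans hai hrm⟩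
        · rw [hr'k k hki hkj]; exact hfeas1 k
    · rw [← hfeas2, hr']
      exact Equiv.sum_comp (Equiv.swap i j) rstar
  -- strict improvement
  have hle := hopt r' hfeas'
  set g : Fin F → ℝ → ℝ := fun k x => ((1 - β k) * x + c * β k) * Real.exp (-x) with hg
  have hobjr : ∀ r : Fin F → ℝ, obj r = ∑ k, g k (r k) := by
    intro r; rw [hobj r]
  have hdiff : obj r' - obj rstar =
      (g i b - g i a) + (g j a - g j b) := by
    rw [hobjr r', hobjr rstar, ← Finset.sum_sub_distrib]
    have hz : ∀ k ∈ Finset.univ, k ∉ ({i, j} : Finset (Fin F)) →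
        g k (r' k) - g k (rstar k) = 0 := by
      intro k _ hk
      simp only [Finset.mem_insert, Finset.mem_singleton, not_or] at hk
      rw [hr'k k hk.1 hk.2]; ring
    rw [← Finset.sum_subset (Finset.subset_univ ({i, j} : Finset (Fin F))) hz,
      Finset.sum_pair hij, hr'i, hr'j]
  -- key strict inequality
  have hkey : (b - c) * Real.exp (-b) < (a - c) * Real.exp (-a) :=
    key_mono c hc ⟨hb0, by linarith⟩ ⟨le_trans hb0 hcon.le, ha1⟩ hcon
  have hpos : 0 < obj r' - obj rstar := by
    rw [hdiff, hg]
    simp only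
    have hea : (0:ℝ) < Real.exp (-a) := Real.exp_pos _
    have heb : (0:ℝ) < Real.exp (-b) := Real.exp_pos _
    nlinarith [hkey, hβij]
  linarith
end
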